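/- If a₁,…,a_q > 0 satisfy ∑ᵢ aᵢ > q/2, then for all u ∈ [−1,1], the series expansion g_{a₁,…,a_q}(u) = ∑_{m≥1} c_m u^m holds, where c_m = (q^q/(q−1)!) · (∏_{i=2}^q aᵢ)/(∑ᵢ aᵢ)^q · ∑_{j+k=m, 1≤j≤q} σ_{j−1} · (k+q−1)⋯(k+1) · ((∑ᵢaᵢ − q)/∑ᵢaᵢ)^k, with σ₀ = 1, σᵢ = ∑_{2≤j₁<⋯<jᵢ≤q} ∏_{l=1}^i (1−a_{j_l})/a_{j_l} for 1 ≤ i ≤ q−1, and σᵢ = 0 for i ≥ q. -/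

import Mathlib

noncomputable def g (q : ℕ) (a : ℕ → ℝ) (u : ℝ) : ℝ :=
  (q : ℝ) ^ q * u * (∏ i ∈ Finset.Icc 2 q, (a i + (1 - a i) * u)) /
    ((∑ i ∈ Finset.Icc 1 q, a i) - ((∑ i ∈ Finset.Icc 1 q, a i) - q) * u) ^ q

/-- elementary symmetric functions of the (1-aᵢ)/aᵢ, i = 2,…,q -/
noncomputable def sigma (q : ℕ) (a : ℕ → ℝ) (i : ℕ) : ℝ :=
  ∑ s ∈ (Finset.Icc 2 q).powersetCard i, ∏ j ∈ s, (1 - a j) / a j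

/-- the power series coefficients of g at 0 -/
noncomputable def c (q : ℕ) (a : ℕ → ℝ) (m : ℕ) : ℝ :=
  ((q : ℝ) ^ q / (Nat.factorial (q - 1))) *
    ((∏ i ∈ Finset.Icc 2 q, a i) / (∑ i ∈ Finset.Icc 1 q, a i) ^ q) *
    ∑ j ∈ Finset.Icc 1 (min q m),
      sigma q a (j - 1) *
        (∏ l ∈ Finset.range (q - 1), ((m - j : ℕ) + 1 + l : ℝ)) *
        (((∑ i ∈ Finset.Icc 1 q, a i) - q) / (∑ i ∈ Finset.Icc 1 q, a i)) ^ (m - j)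

lemma prod_range_asc (k t : ℕ) :
    ∏ l ∈ Finset.range t, ((k : ℝ) + 1 + l) = ((k + 1).ascFactorial t : ℕ) := by
  induction t with
  | zero => simp
  | succ t ih => rw [Finset.prod_range_succ, ih, Nat.ascFactorial_succ]; push_cast; ring

lemma key_prod (q : ℕ) (hq : 1 ≤ q) (a : ℕ → ℝ) (ha : ∀ i ∈ Finset.Icc 2 q, a i ≠ 0) (u : ℝ) :
    ∏ i ∈ Finset.Icc 2 q, (a i + (1 - a i) * u)
      = ∑ i ∈ Finset.range q, ((∏ i ∈ Finset.Icc 2 q, a i) * sigma q a i) * u ^ i := by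
  have h1 : ∀ i ∈ Finset.Icc 2 q, a i + (1 - a i) * u = (1 - a i) * u + a i := fun i _ => by ring
  rw [Finset.prod_congr rfl h1, Finset.prod_add, Finset.powerset_card_disjiUnion]
  erw [Finset.sum_disjiUnion]
  have hcard : (Finset.Icc 2 q).card + 1 = q := by rw [Nat.card_Icc]; omega
  rw [hcard]
  refine Finset.sum_congr rfl fun i _ => ?_
  rw [sigma, Finset.mul_sum, Finset.sum_mul]
  refine Finset.sum_congr rfl fun t ht => ?_
  obtain ⟨hts, htc⟩ := Finset.mem_powersetCard.mp ht
  rw [← Finset.prod_sdiff hts]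
  have h2 : ∏ j ∈ t, ((1 - a j) * u) = (∏ j ∈ t, (1 - a j)) * u ^ i := by
    rw [Finset.prod_mul_distrib, Finset.prod_const, htc]
  have h3 : (∏ j ∈ t, a j) * ∏ j ∈ t, (1 - a j) / a j = ∏ j ∈ t, (1 - a j) := by
    rw [← Finset.prod_mul_distrib]
    exact Finset.prod_congr rfl fun j hj => by field_simp [ha j (hts hj)]
  calc (∏ j ∈ t, ((1 - a j) * u)) * ∏ j ∈ Finset.Icc 2 q \ t, a j
      = ((∏ j ∈ t, a j) * ∏ j ∈ t, (1 - a j) / a j) * (∏ j ∈ Finset.Icc 2 q \ t, a j) * u ^ i := by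
        rw [h2, h3]; ring
    _ = (∏ j ∈ Finset.Icc 2 q \ t, a j) * (∏ j ∈ t, a j) * (∏ j ∈ t, (1 - a j) / a j) * u ^ i := by
        ring

theorem stmt_12 (q : ℕ) (hq : 1 ≤ q) (a : ℕ → ℝ)
    (ha : ∀ i ∈ Finset.Icc 1 q, 0 < a i)
    (hsum : (q : ℝ) / 2 < ∑ i ∈ Finset.Icc 1 q, a i)
    (u : ℝ) (hu : u ∈ Set.Icc (-1 : ℝ) 1) :
    (∑ i ∈ Finset.Icc 1 q, a i) - ((∑ i ∈ Finset.Icc 1 q, a i) - q) * u ≠ 0 ∧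
    HasSum (fun m : ℕ => c q a (m + 1) * u ^ (m + 1)) (g q a u) := by
  set S : ℝ := ∑ i ∈ Finset.Icc 1 q, a i with hS
  have hq0 : (1 : ℝ) ≤ (q : ℝ) := by exact_mod_cast hq
  have hS0 : 0 < S := by linarith
  have hrabs : |(S - q) / S| < 1 := by
    rw [abs_div, abs_of_pos hS0, div_lt_one hS0, abs_lt]
    constructor <;> linarith
  have hu1 : |u| ≤ 1 := abs_le.mpr ⟨hu.1, hu.2⟩
  set x : ℝ := (S - q) / S * u with hxdef
  have hx : |x| < 1 := by
    calc |x| = |(S - q) / S| * |u| := abs_mul _ _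
      _ ≤ |(S - q) / S| * 1 := mul_le_mul_of_nonneg_left hu1 (abs_nonneg _)
      _ < 1 := by rwa [mul_one]
  have h1x : 0 < 1 - x := by
    have := abs_lt.mp hx
    linarith [this.2]
  have hD : S - (S - q) * u = S * (1 - x) := by
    rw [hxdef]; field_simp
  have hDne : S - (S - q) * u ≠ 0 := by
    rw [hD]; exact mul_ne_zero hS0.ne' h1x.ne'
  refine ⟨hDne, ?_⟩
  set A : ℝ := ∏ i ∈ Finset.Icc 2 q, a i with hA
  set K : ℝ := (q : ℝ) ^ q / (Nat.factorial (q - 1)) * (A / S ^ q) with hK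
  have haz : ∀ i ∈ Finset.Icc 2 q, a i ≠ 0 := by
    intro i hi
    have hi' : i ∈ Finset.Icc 1 q := by
      simp only [Finset.mem_Icc] at hi ⊢; omega
    exact (ha i hi').ne'
  set F : ℕ → ℕ → ℝ := fun j m =>
    if j ≤ m + 1 then
      K * (sigma q a (j - 1) * (∏ l ∈ Finset.range (q - 1), ((m + 1 - j : ℕ) + 1 + l : ℝ)) *
        ((S - q) / S) ^ (m + 1 - j)) * u ^ (m + 1)
    else 0 with hF
  have hchoose : HasSum (fun k : ℕ => ((k + (q - 1)).choose (q - 1) : ℝ) * x ^ k)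
      (1 / (1 - x) ^ q) := by
    have := hasSum_choose_mul_geometric_of_norm_lt_one (𝕜 := ℝ) (q - 1) (by rwa [Real.norm_eq_abs])
    rwa [show q - 1 + 1 = q by omega] at this
  have hFsum : ∀ j ∈ Finset.Icc 1 q,
      HasSum (F j) (K * (Nat.factorial (q - 1)) * sigma q a (j - 1) * u ^ j * (1 / (1 - x) ^ q)) := by
    intro j hj
    have hj1 : 1 ≤ j := (Finset.mem_Icc.mp hj).1
    have hinj : Function.Injective (fun k : ℕ => k + (j - 1)) := fun k l h => by
      simpa using h
    have hvanish : ∀ m, m ∉ Set.range (fun k : ℕ => k + (j - 1)) → F j m = 0 := by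
      intro m hm
      have hlt : m + 1 < j := by
        by_contra h
        exact hm ⟨m + 1 - j, show m + 1 - j + (j - 1) = m by omega⟩
      simp only [hF]
      rw [if_neg (by omega)]
    rw [← Function.Injective.hasSum_iff hinj hvanish]
    have heq : (F j ∘ fun k : ℕ => k + (j - 1)) =
        fun k : ℕ => (K * (Nat.factorial (q - 1)) * sigma q a (j - 1) * u ^ j) *
          (((k + (q - 1)).choose (q - 1) : ℝ) * x ^ k) := by
      funext k
      simp only [Function.comp, hF]
      rw [if_pos (by omega)]
      have e1 : k + (j - 1) + 1 - j = k := by omega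
      have e2 : k + (j - 1) + 1 = k + j := by omega
      rw [e1, e2, prod_range_asc, Nat.ascFactorial_eq_factorial_mul_choose]
      rw [hxdef]
      push_cast
      rw [mul_pow, pow_add]
      ring
    rw [heq]
    exact hchoose.mul_left _
  have htotal := hasSum_sum (f := F) (s := Finset.Icc 1 q)
    (a := fun j => K * (Nat.factorial (q - 1)) * sigma q a (j - 1) * u ^ j * (1 / (1 - x) ^ q))
    hFsum
  have hsummand : ∀ m : ℕ, ∑ j ∈ Finset.Icc 1 q, F j m = c q a (m + 1) * u ^ (m + 1) := by
    intro m
    have hsub : Finset.Icc 1 (min q (m + 1)) ⊆ Finset.Icc 1 q :=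
      Finset.Icc_subset_Icc_right (by omega)
    rw [← Finset.sum_subset hsub]
    · simp only [c]
      rw [← hS, ← hA, Finset.mul_sum, Finset.sum_mul]
      refine Finset.sum_congr rfl fun j hj => ?_
      rw [Finset.mem_Icc] at hj
      simp only [hF]
      rw [if_pos (by omega), hK]
      try ring
    · intro j hj hj'
      rw [Finset.mem_Icc] at hj
      rw [Finset.mem_Icc] at hj'
      simp only [hF]
      rw [if_neg (by omega)]
  have htotval : ∑ j ∈ Finset.Icc 1 q,
      K * (Nat.factorial (q - 1)) * sigma q a (j - 1) * u ^ j * (1 / (1 - x) ^ q) = g q a u := by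
    have hfact : (Nat.factorial (q - 1) : ℝ) ≠ 0 := by
      exact_mod_cast (Nat.factorial_pos (q - 1)).ne'
    have hre : ∑ j ∈ Finset.Icc 1 q,
        K * (Nat.factorial (q - 1)) * sigma q a (j - 1) * u ^ j * (1 / (1 - x) ^ q)
        = (K * (Nat.factorial (q - 1)) * (1 / (1 - x) ^ q)) *
          ∑ i ∈ Finset.range q, sigma q a i * u ^ (i + 1) := by
      rw [Finset.mul_sum, ← Finset.Ico_add_one_right_eq_Icc, Finset.sum_Ico_eq_sum_range]
      try simp only [Nat.add_sub_cancel]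
      refine Finset.sum_congr rfl fun i _ => ?_
      have h1 : 1 + i - 1 = i := by omega
      rw [h1, show 1 + i = i + 1 by omega]
      ring
    rw [hre]
    simp only [g]
    rw [← hS, key_prod q hq a haz u, ← hA, hD, mul_pow]
    have hAs : (q:ℝ) ^ q * u * ∑ i ∈ Finset.range q, A * sigma q a i * u ^ i
        = ((q:ℝ) ^ q * A) * ∑ i ∈ Finset.range q, sigma q a i * u ^ (i + 1) := by
      rw [Finset.mul_sum, Finset.mul_sum]
      refine Finset.sum_congr rfl fun i _ => ?_
      rw [pow_succ]
      ring
    rw [hAs, hK]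
    have hSq : (S : ℝ) ^ q ≠ 0 := pow_ne_zero _ hS0.ne'
    have h1xq : (1 - x) ^ q ≠ 0 := pow_ne_zero _ h1x.ne'
    field_simp
  have h2 : HasSum (fun m : ℕ => c q a (m + 1) * u ^ (m + 1))
      (∑ j ∈ Finset.Icc 1 q,
        K * (Nat.factorial (q - 1)) * sigma q a (j - 1) * u ^ j * (1 / (1 - x) ^ q)) := by
    simpa only [hsummand] using htotal
  rwa [htotval] at h2
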